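/- For every complex number q with |q| < 1, the following identity holds: (1+q^3) · Σ_{n≥0} (−q^2; q^2)_n q^{4n+2} / (q; q^2)_{n+1} = (q^4; q^4)_∞/(q^2; q)_∞ − 1. -/

import Mathlib

/-- The finite q-Pochhammer symbol `(a; q)_n = ∏_{j=0}^{n-1} (1 - a q^j)`. -/
noncomputable def qPoch (a q : ℂ) (n : ℕ) : ℂ := ∏ j ∈ Finset.range n, (1 - a * q ^ j)

/-- The infinite q-Pochhammer symbol `(a; q)_∞ = ∏_{j=0}^{∞} (1 - a q^j)`. -/
noncomputable def qPochInf (a q : ℂ) : ℂ := ∏' j : ℕ, (1 - a * q ^ j)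

lemma factor_ne {a q : ℂ} (ha : ‖a‖ < 1) (hq : ‖q‖ ≤ 1) (j : ℕ) : 1 - a * q ^ j ≠ 0 := by
  have h : ‖a * q ^ j‖ < 1 := by
    rw [norm_mul, norm_pow]
    calc ‖a‖ * ‖q‖ ^ j ≤ ‖a‖ * 1 := by
          exact mul_le_mul_of_nonneg_left (pow_le_one₀ (norm_nonneg q) hq) (norm_nonneg a)
    _ = ‖a‖ := mul_one _
    _ < 1 := ha
  intro hc
  rw [sub_eq_zero] at hc
  rw [← hc] at h
  simp at h

lemma qPoch_ne_zero {a q : ℂ} (ha : ‖a‖ < 1) (hq : ‖q‖ ≤ 1) (n : ℕ) : qPoch a q n ≠ 0 := by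
  rw [qPoch]
  exact Finset.prod_ne_zero_iff.2 fun j _ => factor_ne ha hq j

lemma summable_log_qp {a q : ℂ} (ha : ‖a‖ < 1) (hq : ‖q‖ < 1) :
    Summable fun j : ℕ => Complex.log (1 - a * q ^ j) := by
  have hgeo : Summable fun j : ℕ => (3/2 : ℝ) * (‖a‖ * ‖q‖ ^ j) :=
    ((summable_geometric_of_lt_one (norm_nonneg q) hq).mul_left ‖a‖).mul_left _
  apply Summable.of_norm_bounded_eventually_nat hgeo
  have h0 : Filter.Tendsto (fun j : ℕ => ‖a‖ * ‖q‖ ^ j) Filter.atTop (nhds 0) := by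
    simpa using (tendsto_pow_atTop_nhds_zero_of_norm_lt_one (x := ‖q‖) (by simpa using hq)).const_mul ‖a‖
  filter_upwards [h0.eventually_le_const (by norm_num : (0:ℝ) < 1/2)] with j hj
  have h2 : ‖-(a * q ^ j)‖ ≤ 1/2 := by rwa [norm_neg, norm_mul, norm_pow]
  have := Complex.norm_log_one_add_half_le_self h2
  rw [show (1 : ℂ) + -(a * q ^ j) = 1 - a * q ^ j by ring] at this
  calc ‖Complex.log (1 - a * q ^ j)‖ ≤ 3/2 * ‖-(a * q ^ j)‖ := this
  _ = 3/2 * (‖a‖ * ‖q‖ ^ j) := by rw [norm_neg, norm_mul, norm_pow]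

lemma multipliable_qp {a q : ℂ} (ha : ‖a‖ < 1) (hq : ‖q‖ < 1) :
    Multipliable fun j : ℕ => (1 - a * q ^ j) :=
  Complex.multipliable_of_summable_log (summable_log_qp ha hq)

lemma qPochInf_ne_zero {a q : ℂ} (ha : ‖a‖ < 1) (hq : ‖q‖ < 1) : qPochInf a q ≠ 0 := by
  have := Complex.cexp_tsum_eq_tprod (fun j => factor_ne ha hq.le j) (summable_log_qp ha hq)
  rw [qPochInf, ← this]
  exact Complex.exp_ne_zero _

lemma tendsto_qPoch {a q : ℂ} (ha : ‖a‖ < 1) (hq : ‖q‖ < 1) :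
    Filter.Tendsto (fun n => qPoch a q n) Filter.atTop (nhds (qPochInf a q)) :=
  (multipliable_qp ha hq).hasProd.tendsto_prod_nat

variable {q : ℂ}

lemma I1 (q : ℂ) (n : ℕ) : qPoch (q^2) q (2*n) = qPoch (q^2) (q^2) n * qPoch (q^3) (q^2) n := by
  induction n with
  | zero => simp [qPoch]
  | succ n ih =>
    have h2 : 2*(n+1) = (2*n+1)+1 := by ring
    rw [h2, qPoch, qPoch, qPoch, Finset.prod_range_succ, Finset.prod_range_succ,
      Finset.prod_range_succ]
    rw [qPoch, qPoch, qPoch] at ih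
    rw [Finset.prod_range_succ]
    rw [ih]
    have e1 : (q:ℂ)^(2*n+1) = q * (q^2)^n := by rw [pow_add, pow_mul]; ring
    have e2 : (q:ℂ)^(2*n) = (q^2)^n := by rw [pow_mul]
    rw [e1, e2]
    ring

lemma I2 (q : ℂ) (n : ℕ) : qPoch q (q^2) (n+1) = (1-q) * qPoch (q^3) (q^2) n := by
  rw [qPoch, Finset.prod_range_succ', qPoch]
  have : ∀ j : ℕ, 1 - q * (q^2)^(j+1) = 1 - q^3 * (q^2)^j := by
    intro j; rw [pow_succ]; ring
  rw [Finset.prod_congr rfl fun j _ => this j]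
  simp [mul_comm]

lemma I3 (q : ℂ) (n : ℕ) :
    qPoch (-q^2) (q^2) n * qPoch (q^2) (q^2) n = qPoch (q^4) (q^4) n := by
  rw [qPoch, qPoch, qPoch, ← Finset.prod_mul_distrib]
  refine Finset.prod_congr rfl fun j _ => ?_
  have e : (q:ℂ)^4 * (q^4)^j = (q^2 * (q^2)^j) * (q^2 * (q^2)^j) := by
    rw [show (q:ℂ)^4 = q^2 * q^2 by ring, mul_pow]; ring
  rw [e]; ring

section
variable (hq : ‖q‖ < 1)
include hq

lemma hn1 : ‖q‖ ≤ 1 := hq.le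
lemma hnp (k : ℕ) (hk : 1 ≤ k) : ‖q^k‖ < 1 := by
  rw [norm_pow]
  calc ‖q‖^k ≤ ‖q‖^1 := pow_le_pow_of_le_one (norm_nonneg q) hq.le hk
  _ = ‖q‖ := pow_one _
  _ < 1 := hq

lemma B1 : qPochInf (q^2) q = qPochInf (q^2) (q^2) * qPochInf (q^3) (q^2) := by
  have h2 : ‖(q:ℂ)^2‖ < 1 := hnp hq 2 (by norm_num)
  have h3 : ‖(q:ℂ)^3‖ < 1 := hnp hq 3 (by norm_num)
  have hL : Filter.Tendsto (fun n => qPoch (q^2) q (2*n)) Filter.atTop (nhds (qPochInf (q^2) q)) :=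
    (tendsto_qPoch h2 hq).comp
      (Filter.tendsto_atTop_mono (fun n => by simp; omega) Filter.tendsto_id)
  have hR : Filter.Tendsto (fun n => qPoch (q^2) (q^2) n * qPoch (q^3) (q^2) n) Filter.atTop
      (nhds (qPochInf (q^2) (q^2) * qPochInf (q^3) (q^2))) :=
    (tendsto_qPoch h2 h2).mul (tendsto_qPoch h3 h2)
  exact tendsto_nhds_unique (hL.congr fun n => I1 q n) hR

lemma B2 : qPochInf q (q^2) = (1-q) * qPochInf (q^3) (q^2) := by
  have h2 : ‖(q:ℂ)^2‖ < 1 := hnp hq 2 (by norm_num)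
  have h3 : ‖(q:ℂ)^3‖ < 1 := hnp hq 3 (by norm_num)
  have hL : Filter.Tendsto (fun n => qPoch q (q^2) (n+1)) Filter.atTop (nhds (qPochInf q (q^2))) :=
    (tendsto_qPoch hq h2).comp (Filter.tendsto_add_atTop_nat 1)
  have hR : Filter.Tendsto (fun n => (1-q) * qPoch (q^3) (q^2) n) Filter.atTop
      (nhds ((1-q) * qPochInf (q^3) (q^2))) :=
    (tendsto_qPoch h3 h2).const_mul _
  exact tendsto_nhds_unique (hL.congr fun n => I2 q n) hR

lemma B3 : qPochInf (-q^2) (q^2) * qPochInf (q^2) (q^2) = qPochInf (q^4) (q^4) := by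
  have h2 : ‖(q:ℂ)^2‖ < 1 := hnp hq 2 (by norm_num)
  have h2' : ‖-(q:ℂ)^2‖ < 1 := by rwa [norm_neg]
  have h4 : ‖(q:ℂ)^4‖ < 1 := hnp hq 4 (by norm_num)
  exact tendsto_nhds_unique
    (((tendsto_qPoch h2' h2).mul (tendsto_qPoch h2 h2)).congr fun n => I3 q n)
    (tendsto_qPoch h4 h4)

end

theorem stmt_3 (q : ℂ) (hq : ‖q‖ < 1) :
    (1 + q ^ 3) * ∑' n : ℕ, qPoch (-q ^ 2) (q ^ 2) n * q ^ (4 * n + 2) / qPoch q (q ^ 2) (n + 1) =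
      qPochInf (q ^ 4) (q ^ 4) / qPochInf (q ^ 2) q - 1 := by
  have hq' : ‖q‖ < 1 := hq
  by_cases hq0 : q = 0
  · subst hq0
    have h1 : ∀ n : ℕ, qPoch (-(0:ℂ)^2) ((0:ℂ)^2) n * (0:ℂ) ^ (4*n+2) / qPoch 0 ((0:ℂ)^2) (n+1)
        = 0 := by
      intro n
      simp [zero_pow]
    rw [tsum_congr h1]
    have h4 : qPochInf (0:ℂ) (0:ℂ) = 1 := by
      rw [qPochInf]; simp
    have h2 : qPochInf ((0:ℂ)^4) ((0:ℂ)^4) = 1 := by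
      rw [qPochInf]
      simp
    have h3 : qPochInf ((0:ℂ)^2) (0:ℂ) = 1 := by
      rw [qPochInf]
      simp
    simp [h2, h3, h4]
  -- general nonzero case
  have h1n : ‖(q:ℂ)^1‖ < 1 := hnp hq' 1 le_rfl
  have h2n : ‖(q:ℂ)^2‖ < 1 := hnp hq' 2 (by norm_num)
  have h2n' : ‖-(q:ℂ)^2‖ < 1 := by rwa [norm_neg]
  have h3n : ‖(q:ℂ)^3‖ < 1 := hnp hq' 3 (by norm_num)
  have h4n : ‖(q:ℂ)^4‖ < 1 := hnp hq' 4 (by norm_num)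
  have hq13 : (1:ℂ) + q^3 ≠ 0 := by
    intro h
    have : (q:ℂ)^3 = -1 := by linear_combination h
    rw [this] at h3n
    simp at h3n
  have h1q : (1:ℂ) - q ≠ 0 := by
    have := factor_ne hq' hq'.le 0
    simpa using this
  have hD : ∀ n, qPoch q (q^2) n ≠ 0 := qPoch_ne_zero hq' h2n.le
  have hP : ∀ n, qPoch (-q^2) (q^2) n ≠ 0 := qPoch_ne_zero h2n' h2n.le
  set u : ℕ → ℂ := fun n => qPoch (-q^2) (q^2) n * q^(4*n+2) / qPoch q (q^2) (n+1) with hu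
  set g : ℕ → ℂ := fun n => (1+q^3) * u n with hg
  set F : ℕ → ℂ := fun n =>
    ((1-q) + q^(2*n+2) - q^(4*n+2)) * qPoch (-q^2) (q^2) n / qPoch q (q^2) (n+1) with hF
  -- power rewrites
  have ex1 : ∀ n : ℕ, (q:ℂ)^(2*n+2) = q^2 * ((q^2)^n) := by
    intro n; rw [pow_add, pow_mul]; ring
  have ex2 : ∀ n : ℕ, (q:ℂ)^(4*n+2) = q^2 * ((q^2)^n)^2 := by
    intro n
    rw [← pow_mul, ← pow_mul, pow_add]
    ring
  -- step 1: telescoping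
  have step1 : ∀ n : ℕ, g n = F (n+1) - F n := by
    intro n
    have hPn1 : qPoch (-q^2) (q^2) (n+1) = qPoch (-q^2) (q^2) n * (1 + q^2 * (q^2)^n) := by
      rw [qPoch, Finset.prod_range_succ, ← qPoch]; ring
    have hDn2 : qPoch q (q^2) (n+2) = qPoch q (q^2) (n+1) * (1 - q^3 * (q^2)^n) := by
      rw [qPoch, Finset.prod_range_succ, ← qPoch, pow_succ]; ring
    have hfac : (1:ℂ) - q^3 * (q^2)^n ≠ 0 := by
      have := factor_ne h3n h2n.le n
      simpa using this
    rw [hg, hF, hu]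
    simp only []
    rw [hPn1, hDn2, ex1, ex1, ex2, ex2]
    rw [show ((q:ℂ)^2)^(n+1) = (q^2)^n * q^2 from pow_succ _ _]
    rw [← mul_div_assoc, div_sub_div _ _ (mul_ne_zero (hD (n+1)) hfac) (hD (n+1)),
      div_eq_div_iff (hD (n+1)) (mul_ne_zero (mul_ne_zero (hD (n+1)) hfac) (hD (n+1)))]
    ring
  -- step 2: partial sums
  have hF0 : F 0 = 1 := by
    rw [hF]
    simp only []
    rw [qPoch, qPoch, Finset.prod_range_zero, Finset.prod_range_one]
    simp only [pow_zero, mul_one]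
    norm_num
    exact h1q
  have step2 : ∀ N : ℕ, ∑ i ∈ Finset.range N, g i = F N - 1 := by
    intro N
    rw [Finset.sum_congr rfl fun i _ => step1 i, Finset.sum_range_sub, hF0]
  -- step 3: limit of F
  set L : ℂ := (1-q) * qPochInf (-q^2) (q^2) / qPochInf q (q^2) with hL
  have hQinf : qPochInf q (q^2) ≠ 0 := qPochInf_ne_zero hq' h2n
  have tz2 : Filter.Tendsto (fun n : ℕ => ((q:ℂ)^2)^n) Filter.atTop (nhds 0) :=
    tendsto_pow_atTop_nhds_zero_of_norm_lt_one h2n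
  have step3 : Filter.Tendsto F Filter.atTop (nhds L) := by
    have hc : Filter.Tendsto (fun n : ℕ => (1-q) + q^(2*n+2) - q^(4*n+2)) Filter.atTop
        (nhds (1-q)) := by
      have : Filter.Tendsto (fun n : ℕ => (1-q) + q^2 * ((q^2)^n) - q^2 * ((q^2)^n)^2)
          Filter.atTop (nhds ((1-q) + q^2 * 0 - q^2 * 0^2)) := by
        exact ((tendsto_const_nhds.add (tz2.const_mul _)).sub ((tz2.pow 2).const_mul _))
      simp only [mul_zero, add_zero, sub_zero, ne_eq, OfNat.ofNat_ne_zero,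
        not_false_eq_true, zero_pow] at this
      exact this.congr fun n => by rw [ex1, ex2]
    have := ((hc.mul (tendsto_qPoch h2n' h2n)).div
      ((tendsto_qPoch hq' h2n).comp (Filter.tendsto_add_atTop_nat 1)) hQinf)
    refine this.congr fun n => ?_
    simp [hF, Function.comp, div_eq_mul_inv]
  -- step 4: summability
  have hgne : ∀ n, g n ≠ 0 := by
    intro n
    exact mul_ne_zero hq13 (div_ne_zero (mul_ne_zero (hP n) (pow_ne_zero _ hq0)) (hD (n+1)))
  have hrat : ∀ n : ℕ, g (n+1) = g n * ((1 + q^2 * (q^2)^n) * q^4 / (1 - q^3 * (q^2)^n)) := by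
    intro n
    have hPn1 : qPoch (-q^2) (q^2) (n+1) = qPoch (-q^2) (q^2) n * (1 + q^2 * (q^2)^n) := by
      rw [qPoch, Finset.prod_range_succ, ← qPoch]; ring
    have hDn2 : qPoch q (q^2) (n+2) = qPoch q (q^2) (n+1) * (1 - q^3 * (q^2)^n) := by
      rw [qPoch, Finset.prod_range_succ, ← qPoch, pow_succ]; ring
    have hfac : (1:ℂ) - q^3 * (q^2)^n ≠ 0 := by
      have := factor_ne h3n h2n.le n
      simpa using this
    rw [hg, hu]
    simp only []
    rw [hPn1, show n+1+1 = n+2 from rfl, hDn2, show 4*(n+1)+2 = 4*n+2+4 by ring,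
      pow_add (q) (4*n+2)]
    field_simp
  have hsum : Summable g := by
    apply summable_of_ratio_test_tendsto_lt_one h4n (Filter.Eventually.of_forall hgne)
    have hlim : Filter.Tendsto (fun n : ℕ => (1 + q^2 * (q^2)^n) * q^4 / (1 - q^3 * (q^2)^n))
        Filter.atTop (nhds (q^4)) := by
      have : Filter.Tendsto (fun n : ℕ => (1 + q^2 * (q^2)^n) * q^4 / (1 - q^3 * (q^2)^n))
          Filter.atTop (nhds ((1 + q^2 * 0) * q^4 / (1 - q^3 * 0))) := by
        exact ((tendsto_const_nhds.add (tz2.const_mul _)).mul tendsto_const_nhds).div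
          (tendsto_const_nhds.sub (tz2.const_mul _)) (by simp)
      simpa using this
    have h2 : Filter.Tendsto (fun n => ‖g (n+1)‖ / ‖g n‖) Filter.atTop (nhds ‖(q:ℂ)^4‖) := by
      refine ((continuous_norm.tendsto _).comp hlim).congr fun n => ?_
      rw [Function.comp_apply, ← norm_div, hrat n, mul_div_cancel_left₀ _ (hgne n)]
    exact h2
  -- step 5: sum value
  have hhs : HasSum g (L - 1) := by
    rw [hsum.hasSum_iff_tendsto_nat]
    exact (step3.sub_const 1).congr fun n => (step2 n).symm
  -- step 6: assemble
  have hts : (1+q^3) * ∑' n, u n = L - 1 := by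
    rw [← tsum_mul_left, ← hhs.tsum_eq]
  rw [hts, hL]
  -- step 7
  have b1 := B1 hq'
  have b2 := B2 hq'
  have b3 := B3 hq'
  have hB : qPochInf (q^2) (q^2) ≠ 0 := qPochInf_ne_zero h2n h2n
  have hC : qPochInf (q^3) (q^2) ≠ 0 := qPochInf_ne_zero h3n h2n
  have hQ2 : qPochInf (q^2) q ≠ 0 := by rw [b1]; exact mul_ne_zero hB hC
  rw [b2, b1, ← b3]
  field_simp
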